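/- Let c > 0 and let α : ℝ → ℝ be continuous on [0, c], strictly increasing on [0, c], satisfy α(0) = 0, and be strictly concave on [0, c]. Then for every ε ∈ (0, c), the crossing time satisfies T_α(ε, c) = ∫_ε^c (1/α(y)) dy < (c/α(c))·ln(c/ε); equivalently, the windowed nominal rate satisfies σ_α(ε, c) > α(c)/c, i.e., the endpoint-relaxation ratio r_α(ε, c) = α(c)/(σ_α(ε, c)·c) is strictly less than 1. -/

import Mathlib

open intervalIntegral Real

/-- Crossing time of the comparison ODE on the window `[ε, c]`. -/
noncomputable def Tcross (α : ℝ → ℝ) (ε c : ℝ) : ℝ := ∫ y in ε..c, 1 / α y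

/-- Windowed nominal exponential decay rate on `[ε, c]`. -/
noncomputable def sigmaNom (α : ℝ → ℝ) (ε c : ℝ) : ℝ :=
  Real.log (c / ε) / Tcross α ε c

/-- A strictly concave comparison function beats its chord: the crossing time is
strictly smaller than the linear one with the same endpoint, equivalently the
windowed nominal rate strictly exceeds `α(c)/c` (endpoint-relaxation ratio `< 1`). -/
theorem stmt_4 (α : ℝ → ℝ) (c : ℝ) (hc : 0 < c)
    (hcont : ContinuousOn α (Set.Icc 0 c))
    (hmono : StrictMonoOn α (Set.Icc 0 c))
    (h0 : α 0 = 0)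
    (hcave : StrictConcaveOn ℝ (Set.Icc 0 c) α) :
    ∀ ε ∈ Set.Ioo 0 c,
      Tcross α ε c < (c / α c) * Real.log (c / ε) ∧
      α c / c < sigmaNom α ε c := by
  intro ε hε
  obtain ⟨hε0, hεc⟩ := hε
  have hαc : 0 < α c := by
    have := hmono (Set.left_mem_Icc.2 hc.le) (Set.right_mem_Icc.2 hc.le) hc
    rwa [h0] at this
  -- pointwise positivity of α on Ioc 0 c
  have hαpos : ∀ y ∈ Set.Icc ε c, 0 < α y := by
    intro y hy
    have hy0 : (0:ℝ) < y := lt_of_lt_of_le hε0 hy.1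
    have := hmono (Set.left_mem_Icc.2 hc.le) ⟨hy0.le, hy.2⟩ hy0
    rwa [h0] at this
  -- chord inequality: α(c)/c * y < α y for y in (0,c)
  have hchord : ∀ y ∈ Set.Ioo (0:ℝ) c, α c / c * y < α y := by
    intro y hy
    obtain ⟨hy0, hyc⟩ := hy
    have hb : 0 < y / c := div_pos hy0 hc
    have ha : 0 < 1 - y / c := by
      have : y / c < 1 := (div_lt_one hc).2 hyc
      linarith
    have hkey := hcave.2 (Set.left_mem_Icc.2 hc.le) (Set.right_mem_Icc.2 hc.le)
      (ne_of_lt hc) ha hb (by ring)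
    have heq : (1 - y / c) • (0:ℝ) + (y / c) • c = y := by
      field_simp
      simp [smul_eq_mul, hc.ne']
    rw [heq, h0] at hkey
    have h3 : α c / c * y = y / c * α c := by ring
    rw [h3]
    simpa [smul_eq_mul] using hkey
  have hεle : ε ≤ c := hεc.le
  have hsub : Set.Icc ε c ⊆ Set.Icc 0 c := Set.Icc_subset_Icc hε0.le le_rfl
  have hcont' : ContinuousOn (fun y => 1 / α y) (Set.Icc ε c) := by
    apply ContinuousOn.div continuousOn_const (hcont.mono hsub)
    intro y hy; exact (hαpos y hy).ne'
  have hcont2 : ContinuousOn (fun y => c / α c * (1 / y)) (Set.Icc ε c) := by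
    apply ContinuousOn.mul continuousOn_const
    apply ContinuousOn.div continuousOn_const continuousOn_id
    intro y hy; exact (lt_of_lt_of_le hε0 hy.1).ne'
  have hint1 : IntervalIntegrable (fun y => 1 / α y) MeasureTheory.volume ε c :=
    hcont'.intervalIntegrable_of_Icc hεle
  have hint2 : IntervalIntegrable (fun y => c / α c * (1 / y)) MeasureTheory.volume ε c :=
    hcont2.intervalIntegrable_of_Icc hεle
  -- strict pointwise inequality on Ioo ε c
  have hlt : ∀ y ∈ Set.Ioo ε c, 0 < c / α c * (1 / y) - 1 / α y := by
    intro y hy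
    have hy0 : (0:ℝ) < y := lt_trans hε0 hy.1
    have hαy : 0 < α y := hαpos y ⟨hy.1.le, hy.2.le⟩
    have hch := hchord y ⟨hy0, hy.2⟩
    have h1 : 1 / α y < 1 / (α c / c * y) := by
      apply one_div_lt_one_div_of_lt
      · exact mul_pos (div_pos hαc hc) hy0
      · exact hch
    have h2 : 1 / (α c / c * y) = c / α c * (1 / y) := by
      field_simp
    linarith [h1, h2 ▸ h1]
  have hdiff : IntervalIntegrable (fun y => c / α c * (1 / y) - 1 / α y)
      MeasureTheory.volume ε c := hint2.sub hint1
  have hposint : 0 < ∫ y in ε..c, (c / α c * (1 / y) - 1 / α y) := by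
    apply intervalIntegral.intervalIntegral_pos_of_pos_on hdiff hlt hεc
  have hsplit : (∫ y in ε..c, (c / α c * (1 / y) - 1 / α y)) =
      (∫ y in ε..c, c / α c * (1 / y)) - ∫ y in ε..c, 1 / α y :=
    intervalIntegral.integral_sub hint2 hint1
  have hlog : (∫ y in ε..c, c / α c * (1 / y)) = c / α c * Real.log (c / ε) := by
    rw [intervalIntegral.integral_const_mul]
    have : (∫ y in ε..c, 1 / y) = Real.log (c / ε) := by
      simp only [one_div]
      rw [integral_inv_of_pos hε0 hc, Real.log_div hc.ne' hε0.ne']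
    rw [this]
  have hT : Tcross α ε c < c / α c * Real.log (c / ε) := by
    unfold Tcross
    rw [hsplit, hlog] at hposint
    linarith
  refine ⟨hT, ?_⟩
  -- now the rate inequality
  have hTpos : 0 < Tcross α ε c := by
    unfold Tcross
    apply intervalIntegral.intervalIntegral_pos_of_pos_on hint1 _ hεc
    intro y hy
    exact one_div_pos.2 (hαpos y ⟨hy.1.le, hy.2.le⟩)
  have hLpos : 0 < Real.log (c / ε) :=
    Real.log_pos ((one_lt_div hε0).2 hεc)
  unfold sigmaNom
  have h1 : α c / c = Real.log (c / ε) / (c / α c * Real.log (c / ε)) := by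
    rw [mul_comm, ← div_div, div_self hLpos.ne', one_div, inv_div]
  rw [h1]
  exact div_lt_div_of_pos_left hLpos hTpos hT
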